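/- arXiv:2412.10350 — 2 statements merged into one kernel-verified Lean document; each statement's English description precedes it below -/
import Mathlib

section
/- Let p, g ∈ ℝ² with p ≠ g, let u, v be unit vectors, and let κₕ, κₜ > 0 with κₕ < 1. Define h = p + κₕ‖p − g‖u and t = g − κₜ‖p − g‖v. Then ⟨t − h, u⟩ ≥ 0 if and only if ⟨(g − p)/‖g − p‖, u⟩ ≥ κₕ + κₜ·⟨v, u⟩, and the same equivalence holds with strict inequalities. -/
open scoped RealInnerProductSpace

theorem stmt_3 (p g u v : EuclideanSpace ℝ (Fin 2)) (hpg : p ≠ g)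
    (hu : ‖u‖ = 1) (hv : ‖v‖ = 1) (κh κt : ℝ) (hκh : 0 < κh) (hκt : 0 < κt)
    (hκh1 : κh < 1) :
    (⟪(g - (κt * ‖p - g‖) • v) - (p + (κh * ‖p - g‖) • u), u⟫ ≥ 0 ↔
      ⟪(‖g - p‖)⁻¹ • (g - p), u⟫ ≥ κh + κt * ⟪v, u⟫) ∧
    (⟪(g - (κt * ‖p - g‖) • v) - (p + (κh * ‖p - g‖) • u), u⟫ > 0 ↔
      ⟪(‖g - p‖)⁻¹ • (g - p), u⟫ > κh + κt * ⟪v, u⟫) := by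
  have hr : (0:ℝ) < ‖p - g‖ := by
    rw [norm_pos_iff, sub_ne_zero]; exact hpg
  have hgp : ‖g - p‖ = ‖p - g‖ := norm_sub_rev g p
  have huu : ⟪u, u⟫ = 1 := by
    rw [real_inner_self_eq_norm_sq, hu]; norm_num
  have hL : ⟪(g - (κt * ‖p - g‖) • v) - (p + (κh * ‖p - g‖) • u), u⟫
      = ⟪g - p, u⟫ - (κt * ‖p - g‖) * ⟪v, u⟫ - (κh * ‖p - g‖) := by
    simp [inner_sub_left, inner_add_left, inner_smul_left, huu]
    rw [hu]; ring
  have hR : ⟪(‖g - p‖)⁻¹ • (g - p), u⟫ = (‖p - g‖)⁻¹ * ⟪g - p, u⟫ := by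
    rw [inner_smul_left, hgp]; simp
  constructor
  · rw [hL, hR, inv_mul_eq_div, ge_iff_le, ge_iff_le, le_div_iff₀ hr]
    constructor <;> intro h <;> nlinarith
  · rw [hL, hR, inv_mul_eq_div, gt_iff_lt, gt_iff_lt, lt_div_iff₀ hr]
    constructor <;> intro h <;> nlinarith
end

section
/- Let θ, θ̂ ∈ ℝ and 0 < δ ≤ 2. Consider minimizing f(φ) = 1 − cos(φ − θ) over the set {φ : 1 − cos(φ − θ̂) ≤ δ}. If 1 − cos(θ − θ̂) ≤ δ, the minimizer is φ = θ with minimum value 0. Otherwise, the minimum is attained at φ = θ̂ + s·arccos(1 − δ) where s ∈ {−1, +1} is chosen to maximize cos(φ − θ), and in both cases the minimizer lies on the boundary 1 − cos(φ − θ̂) = δ. -/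
open Real

lemma arccos_anti {x y : ℝ} (h : x ≤ y) : Real.arccos y ≤ Real.arccos x := by
  simp only [Real.arccos_eq_pi_div_two_sub_arcsin]
  linarith [Real.monotone_arcsin h]

lemma abs_sin_eq (x : ℝ) : |Real.sin x| = Real.sqrt (1 - Real.cos x ^ 2) := by
  rw [← Real.sin_sq x, Real.sqrt_sq_eq_abs]

lemma sin_arccos_cos (x : ℝ) : Real.sin (Real.arccos (Real.cos x)) = |Real.sin x| := by
  rw [Real.sin_arccos, ← abs_sin_eq]

lemma key (c β ψ : ℝ) (hc1 : -1 ≤ c) (hc2 : c ≤ 1) (hβ : Real.cos β ≤ c)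
    (hψ : c ≤ Real.cos ψ) :
    Real.cos (ψ - β) ≤
      Real.cos (Real.arccos c - Real.arccos (Real.cos β)) := by
  have hcosu : Real.cos (Real.arccos (Real.cos ψ)) = Real.cos ψ :=
    Real.cos_arccos (Real.neg_one_le_cos ψ) (Real.cos_le_one ψ)
  have hcosγ : Real.cos (Real.arccos (Real.cos β)) = Real.cos β :=
    Real.cos_arccos (Real.neg_one_le_cos β) (Real.cos_le_one β)
  have h1 : Real.cos (ψ - β) ≤
      Real.cos (Real.arccos (Real.cos ψ) - Real.arccos (Real.cos β)) := by
    rw [Real.cos_sub, Real.cos_sub, hcosu, hcosγ, sin_arccos_cos, sin_arccos_cos]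
    have : Real.sin ψ * Real.sin β ≤ |Real.sin ψ| * |Real.sin β| := by
      rw [← abs_mul]; exact le_abs_self _
    linarith
  have hua : Real.arccos (Real.cos ψ) ≤ Real.arccos c := arccos_anti hψ
  have haγ : Real.arccos c ≤ Real.arccos (Real.cos β) := arccos_anti hβ
  have hγπ : Real.arccos (Real.cos β) ≤ Real.pi := Real.arccos_le_pi _
  have hu0 : 0 ≤ Real.arccos (Real.cos ψ) := Real.arccos_nonneg _
  have h2 : Real.cos (Real.arccos (Real.cos ψ) - Real.arccos (Real.cos β)) ≤
      Real.cos (Real.arccos c - Real.arccos (Real.cos β)) := by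
    rw [← Real.cos_neg (Real.arccos (Real.cos ψ) - _), ← Real.cos_neg (Real.arccos c - _),
      neg_sub, neg_sub]
    exact Real.cos_le_cos_of_nonneg_of_le_pi (by linarith) (by linarith) (by linarith)
  linarith

theorem stmt_13 (θ θhat δ : ℝ) (hδ0 : 0 < δ) (hδ2 : δ ≤ 2) :
    (1 - Real.cos (θ - θhat) ≤ δ →
      (1 - Real.cos (θ - θhat) ≤ δ ∧ 1 - Real.cos (θ - θ) = 0 ∧
        ∀ φ : ℝ, 1 - Real.cos (φ - θhat) ≤ δ → 1 - Real.cos (θ - θ) ≤ 1 - Real.cos (φ - θ))) ∧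
    (¬ (1 - Real.cos (θ - θhat) ≤ δ) →
      ∃ s : ℝ, (s = -1 ∨ s = 1) ∧
        (∀ s' : ℝ, (s' = -1 ∨ s' = 1) →
          Real.cos ((θhat + s' * Real.arccos (1 - δ)) - θ) ≤
            Real.cos ((θhat + s * Real.arccos (1 - δ)) - θ)) ∧
        1 - Real.cos ((θhat + s * Real.arccos (1 - δ)) - θhat) = δ ∧
        ∀ φ : ℝ, 1 - Real.cos (φ - θhat) ≤ δ →
          1 - Real.cos ((θhat + s * Real.arccos (1 - δ)) - θ) ≤ 1 - Real.cos (φ - θ)) := by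
  constructor
  · intro h
    refine ⟨h, by simp, fun φ _ => ?_⟩
    simp only [sub_self, Real.cos_zero]
    linarith [Real.cos_le_one (φ - θ)]
  · intro h
    push_neg at h
    have hc1 : -1 ≤ 1 - δ := by linarith
    have hc2 : 1 - δ ≤ 1 := by linarith
    have hβ : Real.cos (θ - θhat) < 1 - δ := by linarith
    have hcosα : Real.cos (Real.arccos (1 - δ)) = 1 - δ := Real.cos_arccos hc1 hc2
    have hsinα : 0 ≤ Real.sin (Real.arccos (1 - δ)) :=
      Real.sin_nonneg_of_nonneg_of_le_pi (Real.arccos_nonneg _) (Real.arccos_le_pi _)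
    have hval : ∀ t : ℝ, (t = -1 ∨ t = 1) →
        Real.cos ((θhat + t * Real.arccos (1 - δ)) - θ) =
          Real.cos (Real.arccos (1 - δ)) * Real.cos (θ - θhat) +
            t * Real.sin (Real.arccos (1 - δ)) * Real.sin (θ - θhat) := by
      intro t ht
      have h0 : (θhat + t * Real.arccos (1 - δ)) - θ = t * Real.arccos (1 - δ) - (θ - θhat) := by
        ring
      rcases ht with rfl | rfl
      · rw [h0, Real.cos_sub, neg_one_mul, Real.cos_neg, Real.sin_neg]; ring
      · rw [h0, Real.cos_sub, one_mul]; ring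
    obtain ⟨s, hs11, hsmax⟩ : ∃ s : ℝ, (s = -1 ∨ s = 1) ∧
        s * Real.sin (θ - θhat) = |Real.sin (θ - θhat)| := by
      rcases le_or_gt 0 (Real.sin (θ - θhat)) with h' | h'
      · exact ⟨1, Or.inr rfl, by rw [one_mul, abs_of_nonneg h']⟩
      · exact ⟨-1, Or.inl rfl, by rw [abs_of_neg h']; ring⟩
    have hsval : Real.cos ((θhat + s * Real.arccos (1 - δ)) - θ) =
        Real.cos (Real.arccos (1 - δ)) * Real.cos (θ - θhat) +
          Real.sin (Real.arccos (1 - δ)) * |Real.sin (θ - θhat)| := by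
      rw [hval s hs11, ← hsmax]; ring
    refine ⟨s, hs11, ?_, ?_, ?_⟩
    · intro s' hs'
      rw [hval s' hs', hsval]
      have h1 : s' * Real.sin (θ - θhat) ≤ |Real.sin (θ - θhat)| := by
        rcases hs' with rfl | rfl
        · rw [neg_one_mul]; exact neg_le_abs _
        · rw [one_mul]; exact le_abs_self _
      nlinarith
    · have h0 : (θhat + s * Real.arccos (1 - δ)) - θhat = s * Real.arccos (1 - δ) := by ring
      have h1 : Real.cos (s * Real.arccos (1 - δ)) = Real.cos (Real.arccos (1 - δ)) := by
        rcases hs11 with rfl | rfl <;> simp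
      rw [h0, h1, hcosα]; ring
    · intro φ hφ
      have hψ : 1 - δ ≤ Real.cos (φ - θhat) := by linarith
      have hkey := key (1 - δ) (θ - θhat) (φ - θhat) hc1 hc2 hβ.le hψ
      have hφθ : φ - θ = (φ - θhat) - (θ - θhat) := by ring
      have hγval : Real.cos (Real.arccos (1 - δ) - Real.arccos (Real.cos (θ - θhat))) =
          Real.cos (Real.arccos (1 - δ)) * Real.cos (θ - θhat) +
            Real.sin (Real.arccos (1 - δ)) * |Real.sin (θ - θhat)| := by
        rw [Real.cos_sub,
          Real.cos_arccos (Real.neg_one_le_cos _) (Real.cos_le_one _), sin_arccos_cos]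
      rw [hγval] at hkey
      rw [hφθ, hsval]
      linarith
end
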